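/- Let D ≥ 2 be an integer and p ≥ 1. For every w ∈ ℝ^p, the infimum of (1/D)·(‖ω‖₂² + Σ_{d=1}^{D−1} γ_d²) over all ω ∈ ℝ^p and γ_1, …, γ_{D−1} ∈ ℝ satisfying w = (∏_{d=1}^{D−1} γ_d)·ω equals ‖w‖₂^{2/D}, and this infimum is attained exactly at the balanced representations of w. -/

import Mathlib

open Finset

/-- AM-GM with equality case, over a finite nonempty index type, positive entries. -/
lemma amgm_aux {ι : Type*} [Fintype ι] [Nonempty ι] (a : ι → ℝ) (ha : ∀ i, 0 < a i) :
    (∏ i, a i) ^ ((1 : ℝ) / (Fintype.card ι : ℝ)) ≤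
      (1 / (Fintype.card ι : ℝ)) * ∑ i, a i ∧
    ((1 / (Fintype.card ι : ℝ)) * ∑ i, a i
        = (∏ i, a i) ^ ((1 : ℝ) / (Fintype.card ι : ℝ)) ↔ ∀ i j, a i = a j) := by
  set n : ℝ := (Fintype.card ι : ℝ) with hn
  have hn0 : 0 < n := by
    rw [hn]; exact_mod_cast Fintype.card_pos
  have h₁ : ∑ _i : ι, (1 / n) = 1 := by
    rw [Finset.sum_const, Finset.card_univ, nsmul_eq_mul]
    field_simp
    exact hn.symm
  have hprod : 0 < ∏ i, a i := Finset.prod_pos fun i _ => ha i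
  have hA : Real.exp (∑ i, (1 / n) • Real.log (a i)) = (∏ i, a i) ^ ((1 : ℝ) / n) := by
    rw [Real.rpow_def_of_pos hprod, Real.log_prod (fun i _ => (ha i).ne')]
    congr 1
    simp only [smul_eq_mul, ← Finset.mul_sum]
    ring
  have hB : ∑ i, (1 / n) • Real.exp (Real.log (a i)) = (1 / n) * ∑ i, a i := by
    simp only [smul_eq_mul, ← Finset.mul_sum]
    congr 1
    exact Finset.sum_congr rfl fun i _ => Real.exp_log (ha i)
  constructor
  · have := convexOn_exp.map_sum_le (t := Finset.univ) (w := fun _ : ι => 1 / n)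
      (p := fun i => Real.log (a i)) (fun i _ => by positivity) h₁ (fun i _ => Set.mem_univ _)
    rw [hA, hB] at this
    exact this
  · have hiff := strictConvexOn_exp.map_sum_eq_iff (t := Finset.univ)
      (w := fun _ : ι => 1 / n) (p := fun i => Real.log (a i))
      (fun i _ => by positivity) h₁ (fun i _ => Set.mem_univ _)
    rw [hA, hB] at hiff
    constructor
    · intro h i j
      have h' := hiff.mp h.symm
      have hij : Real.log (a i) = Real.log (a j) :=
        (h' i (Finset.mem_univ i)).trans (h' j (Finset.mem_univ j)).symm
      have := congrArg Real.exp hij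
      rwa [Real.exp_log (ha i), Real.exp_log (ha j)] at this
    · intro h
      refine (hiff.mpr ?_).symm
      intro j _
      have : ∑ i, (1 / n) • Real.log (a i) = ∑ i : ι, (1 / n) • Real.log (a j) := by
        refine Finset.sum_congr rfl fun i _ => ?_
        rw [h i j]
      rw [this, ← Finset.sum_smul, h₁, one_smul]

theorem stmt_5 (D p : ℕ) (hD : 2 ≤ D) (hp : 1 ≤ p)
    (w : EuclideanSpace ℝ (Fin p)) :
    IsLeast {r : ℝ | ∃ (ω : EuclideanSpace ℝ (Fin p)) (γ : Fin (D - 1) → ℝ),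
        w = (∏ d, γ d) • ω ∧ r = (1 / (D : ℝ)) * (‖ω‖ ^ 2 + ∑ d, γ d ^ 2)}
      (‖w‖ ^ ((2 : ℝ) / (D : ℝ))) ∧
    ∀ (ω : EuclideanSpace ℝ (Fin p)) (γ : Fin (D - 1) → ℝ),
      w = (∏ d, γ d) • ω →
        ((1 / (D : ℝ)) * (‖ω‖ ^ 2 + ∑ d, γ d ^ 2) = ‖w‖ ^ ((2 : ℝ) / (D : ℝ)) ↔
          ∀ d : Fin (D - 1), ‖ω‖ ^ 2 = γ d ^ 2) := by
  have hDpos : (0 : ℝ) < (D : ℝ) := by exact_mod_cast Nat.lt_of_lt_of_le Nat.zero_lt_two hD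
  have hDne : (D : ℝ) ≠ 0 := hDpos.ne'
  haveI hne : Nonempty (Fin (D - 1)) := ⟨⟨0, by omega⟩⟩
  have hcard : (Fintype.card (Option (Fin (D - 1))) : ℝ) = (D : ℝ) := by
    have : Fintype.card (Option (Fin (D - 1))) = D := by
      simp [Fintype.card_option]; omega
    rw [this]
  have hGM : ∀ x : ℝ, 0 ≤ x → (x ^ 2) ^ ((1 : ℝ) / (D : ℝ)) = x ^ ((2 : ℝ) / (D : ℝ)) := by
    intro x hx
    rw [← Real.rpow_natCast x 2, ← Real.rpow_mul hx]
    congr 1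
    push_cast
    ring
  -- the key pointwise fact
  have key : ∀ (ω : EuclideanSpace ℝ (Fin p)) (γ : Fin (D - 1) → ℝ),
      w = (∏ d, γ d) • ω →
      (‖w‖ ^ ((2 : ℝ) / (D : ℝ)) ≤ (1 / (D : ℝ)) * (‖ω‖ ^ 2 + ∑ d, γ d ^ 2)) ∧
      ((1 / (D : ℝ)) * (‖ω‖ ^ 2 + ∑ d, γ d ^ 2) = ‖w‖ ^ ((2 : ℝ) / (D : ℝ)) ↔
        ∀ d : Fin (D - 1), ‖ω‖ ^ 2 = γ d ^ 2) := by
    intro ω γ hw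
    set a : Option (Fin (D - 1)) → ℝ := fun o => o.elim (‖ω‖ ^ 2) (fun d => γ d ^ 2) with ha
    have hsum : ∑ i, a i = ‖ω‖ ^ 2 + ∑ d, γ d ^ 2 := by
      rw [Fintype.sum_option]
      rfl
    have hprodw : ∏ i, a i = ‖w‖ ^ 2 := by
      rw [Fintype.prod_option]
      have : ‖w‖ = |∏ d, γ d| * ‖ω‖ := by rw [hw, norm_smul, Real.norm_eq_abs]
      rw [this, mul_pow, sq_abs, ← Finset.prod_pow]
      show ‖ω‖ ^ 2 * ∏ i : Fin (D - 1), γ i ^ 2 = _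
      ring
    by_cases hw0 : w = 0
    · -- degenerate case
      have hT : ‖w‖ ^ ((2 : ℝ) / (D : ℝ)) = 0 := by
        rw [hw0, norm_zero, Real.zero_rpow (by positivity)]
      constructor
      · rw [hT]; positivity
      · rw [hT]
        constructor
        · intro h
          have hS : ‖ω‖ ^ 2 + ∑ d, γ d ^ 2 = 0 := by
            have h1D : (1 / (D : ℝ)) ≠ 0 := by positivity
            rcases mul_eq_zero.mp h with h' | h'
            · exact absurd h' h1D
            · exact h'
          have hω : ‖ω‖ ^ 2 = 0 := by
            have h2 : (0:ℝ) ≤ ∑ d, γ d ^ 2 := Finset.sum_nonneg fun d _ => sq_nonneg _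
            nlinarith [sq_nonneg ‖ω‖]
          have hγ : ∀ d, γ d ^ 2 = 0 := by
            intro d
            have h2 : ∑ d, γ d ^ 2 = 0 := by nlinarith [sq_nonneg ‖ω‖]
            have := (Finset.sum_eq_zero_iff_of_nonneg (fun d _ => sq_nonneg (γ d))).mp h2
            exact this d (Finset.mem_univ d)
          intro d; rw [hω, hγ d]
        · intro hbal
          have hω : ‖ω‖ ^ 2 = 0 := by
            by_contra hc
            have hωne : ω ≠ 0 := by
              intro h0; apply hc; rw [h0, norm_zero]; ring
            have hγne : ∀ d, γ d ≠ 0 := by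
              intro d h0
              apply hc; rw [hbal d, h0]; ring
            have hpne : (∏ d, γ d) ≠ 0 := Finset.prod_ne_zero_iff.mpr fun d _ => hγne d
            have hwne : w ≠ 0 := by rw [hw]; exact smul_ne_zero hpne hωne
            exact hwne hw0
          have hγ : ∀ d, γ d ^ 2 = 0 := fun d => (hbal d).symm.trans hω
          have : ∑ d, γ d ^ 2 = 0 := Finset.sum_eq_zero fun d _ => hγ d
          rw [hω, this]; ring
    · -- nondegenerate case: all entries positive
      have hprodγ : (∏ d, γ d) ≠ 0 := by
        intro h0; apply hw0; rw [hw, h0, zero_smul]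
      have hωne : ω ≠ 0 := by
        intro h0; apply hw0; rw [hw, h0, smul_zero]
      have hapos : ∀ i, 0 < a i := by
        rintro (_ | d)
        · show (0:ℝ) < ‖ω‖ ^ 2
          exact pow_pos (norm_pos_iff.mpr hωne) 2
        · show (0:ℝ) < γ d ^ 2
          have hd : γ d ≠ 0 := by
            intro h0
            exact hprodγ (Finset.prod_eq_zero (Finset.mem_univ d) h0)
          positivity
      obtain ⟨hle, hiff⟩ := amgm_aux a hapos
      rw [hcard, hsum, hprodw, hGM _ (norm_nonneg w)] at hle hiff
      refine ⟨hle, hiff.trans ?_⟩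
      constructor
      · intro h d
        exact h none (some d)
      · intro hbal i j
        match i, j with
        | none, none => rfl
        | none, some j => exact hbal j
        | some i, none => exact (hbal i).symm
        | some i, some j => exact (hbal i).symm.trans (hbal j)
  refine ⟨⟨?_, ?_⟩, fun ω γ hw => (key ω γ hw).2⟩
  · -- membership: balanced representation attains the value
    by_cases hw0 : w = 0
    · refine ⟨0, fun _ => 0, by rw [hw0, smul_zero], ?_⟩
      have := (key 0 (fun _ => 0) (by rw [hw0, smul_zero])).2.mpr (fun d => by simp)
      exact this.symm
    · set c : ℝ := ‖w‖ ^ ((1 : ℝ) / (D : ℝ)) with hc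
      have hwpos : 0 < ‖w‖ := norm_pos_iff.mpr hw0
      have hcpos : 0 < c := Real.rpow_pos_of_pos hwpos _
      have hcD : c ^ D = ‖w‖ := by
        rw [hc, ← Real.rpow_natCast (‖w‖ ^ ((1:ℝ)/(D:ℝ))) D, ← Real.rpow_mul (norm_nonneg w)]
        rw [one_div_mul_cancel hDne, Real.rpow_one]
      set ω : EuclideanSpace ℝ (Fin p) := (c ^ (D - 1))⁻¹ • w with hω
      have hprodc : (∏ _d : Fin (D - 1), c) = c ^ (D - 1) := by
        rw [Finset.prod_const, Finset.card_univ, Fintype.card_fin]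
      have hrep : w = (∏ _d : Fin (D - 1), c) • ω := by
        rw [hprodc, hω, smul_smul, mul_inv_cancel₀ (by positivity), one_smul]
      have hnormω : ‖ω‖ = c := by
        rw [hω, norm_smul, norm_inv, Real.norm_eq_abs, abs_of_pos (by positivity)]
        rw [← hcD]
        have : c ^ D = c ^ (D - 1) * c := by
          rw [← pow_succ]
          congr 1
          omega
        rw [this]
        field_simp
      refine ⟨ω, fun _ => c, hrep, ?_⟩
      have := (key ω (fun _ => c) hrep).2.mpr (fun d => by rw [hnormω])
      exact this.symm
  · rintro r ⟨ω, γ, hw, rfl⟩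
    exact (key ω γ hw).1
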